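/- Let k ≥ 2 be an integer, β = √(k/(k−1)) − 1, and α = 2k + 2√(k(k−1)) − 1. Let μ be a probability distribution over subsets of a finite set M with P_μ[j ∈ T] ≤ β/(1+β) for all j. Then for every MPH-k function v and every S ⊆ M, β·∑_T μ(T)·v(S \ T) ≥ (1/α)·v(S). -/

import Mathlib

open Finset

/-- `v` is an MPH-`k` function: the pointwise maximum of finitely many PH-`k`
functions, i.e. functions of the form `S ↦ ∑ X ⊆ S, w X` with `w ≥ 0`
supported on sets of cardinality at most `k`. -/
def IsMPH {ι : Type*} [DecidableEq ι] (k : ℕ) (v : Finset ι → ℝ) : Prop :=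
  ∃ t : ℕ, 0 < t ∧ ∃ w : Fin t → Finset ι → ℝ,
    (∀ ℓ X, 0 ≤ w ℓ X) ∧
    (∀ (ℓ : Fin t) (X : Finset ι), k < X.card → w ℓ X = 0) ∧
    (∀ S : Finset ι, ∃ ℓ : Fin t, v S = ∑ X ∈ S.powerset, w ℓ X) ∧
    (∀ (S : Finset ι) (ℓ : Fin t), (∑ X ∈ S.powerset, w ℓ X) ≤ v S)

theorem stmt_15 {ι : Type*} [Fintype ι] [DecidableEq ι]
    (μ : Finset ι → ℝ) (hμ0 : ∀ T, 0 ≤ μ T) (hμ1 : ∑ T : Finset ι, μ T = 1)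
    (k : ℕ) (hk : 2 ≤ k)
    (β : ℝ) (hβ : β = Real.sqrt ((k : ℝ) / ((k : ℝ) - 1)) - 1)
    (α : ℝ) (hα : α = 2 * k + 2 * Real.sqrt ((k : ℝ) * ((k : ℝ) - 1)) - 1)
    (h : ∀ j : ι, (∑ T : Finset ι, if j ∈ T then μ T else 0) ≤ β / (1 + β))
    (v : Finset ι → ℝ) (hv : IsMPH k v) (S : Finset ι) :
    β * (∑ T : Finset ι, μ T * v (S \ T)) ≥ (1 / α) * v S := by
  obtain ⟨t, ht, w, hw0, hwk, hveq, hvle⟩ := hv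
  obtain ⟨ℓ, hℓ⟩ := hveq S
  set K : ℝ := (k : ℝ) with hKdef
  have hK2 : (2:ℝ) ≤ K := by rw [hKdef]; exact_mod_cast hk
  have hK1 : (0:ℝ) < K - 1 := by linarith
  set s : ℝ := Real.sqrt (K * (K - 1)) with hsdef
  have hs2 : s ^ 2 = K * (K - 1) := Real.sq_sqrt (by nlinarith)
  have hs0 : 0 ≤ s := Real.sqrt_nonneg _
  have hsge : K - 1 ≤ s := by nlinarith [hs2, hs0, hK1]
  have hspos : 0 < s := by linarith
  have hsqrt : Real.sqrt (K / (K - 1)) * (K - 1) = s := by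
    rw [hsdef, show K * (K - 1) = (K / (K - 1)) * (K - 1)^2 by field_simp,
      Real.sqrt_mul (div_nonneg (by linarith) (by linarith)), Real.sqrt_sq hK1.le]
  have h1β : (1 + β) * (K - 1) = s := by
    have h' : 1 + β = Real.sqrt (K / (K - 1)) := by rw [hβ]; ring
    rw [h']; exact hsqrt
  have hβ0 : 0 ≤ β := by nlinarith [h1β, hsge, hK1]
  have h1βpos : 0 < 1 + β := by linarith
  have hβs : β = s / (K - 1) - 1 := by field_simp; linear_combination h1β
  set p : ℝ := β / (1 + β) with hpdef
  have hp0 : 0 ≤ p := div_nonneg hβ0 h1βpos.le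
  have hpval : p = 1 - (K - 1) / s := by
    rw [hpdef, hβs]
    field_simp
    rw [div_eq_iff (by linarith)]; ring
  have hαpos : 0 < α := by rw [hα]; linarith
  have hfinal : β * (1 - K * p) * α = 1 := by
    rw [hβs, hpval, hα]
    field_simp
    ring_nf
    linear_combination (2*K^2 - 3*K + 1 + s*(2 - 2*K)) * hs2
  -- Step A
  have stepA : ∀ T : Finset ι,
      (∑ X ∈ S.powerset, if Disjoint X T then w ℓ X else 0) ≤ v (S \ T) := by
    intro T
    have hfilter : S.powerset.filter (fun X => Disjoint X T) = (S \ T).powerset := by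
      ext X
      simp [Finset.mem_filter, Finset.mem_powerset, Finset.subset_sdiff]
    calc (∑ X ∈ S.powerset, if Disjoint X T then w ℓ X else 0)
        = ∑ X ∈ S.powerset.filter (fun X => Disjoint X T), w ℓ X := (Finset.sum_filter _ _).symm
      _ = ∑ X ∈ (S \ T).powerset, w ℓ X := by rw [hfilter]
      _ ≤ v (S \ T) := hvle _ ℓ
  -- swap
  have swap : ∑ T : Finset ι, μ T * (∑ X ∈ S.powerset, if Disjoint X T then w ℓ X else 0)
      = ∑ X ∈ S.powerset, w ℓ X * (∑ T : Finset ι, if Disjoint X T then μ T else 0) := by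
    simp_rw [Finset.mul_sum]
    rw [Finset.sum_comm]
    apply Finset.sum_congr rfl; intro X _
    apply Finset.sum_congr rfl; intro T _
    by_cases hd : Disjoint X T <;> simp [hd, mul_comm]
  -- union bound
  have qbound : ∀ X ∈ S.powerset, w ℓ X ≠ 0 →
      1 - K * p ≤ ∑ T : Finset ι, if Disjoint X T then μ T else 0 := by
    intro X _ hwne
    have hcard : X.card ≤ k := by
      by_contra hc
      exact hwne (hwk ℓ X (lt_of_not_ge hc))
    have hsplit : (∑ T : Finset ι, if Disjoint X T then μ T else 0)
        + (∑ T : Finset ι, if ¬ Disjoint X T then μ T else 0) = 1 := by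
      rw [← Finset.sum_add_distrib, ← hμ1]
      apply Finset.sum_congr rfl
      intro T _
      by_cases hd : Disjoint X T <;> simp [hd]
    have hub : (∑ T : Finset ι, if ¬ Disjoint X T then μ T else 0)
        ≤ ∑ j ∈ X, ∑ T : Finset ι, if j ∈ T then μ T else 0 := by
      rw [Finset.sum_comm]
      apply Finset.sum_le_sum
      intro T _
      by_cases hd : Disjoint X T
      · simp only [hd, not_true_eq_false, if_false]
        exact Finset.sum_nonneg fun j _ => by
          by_cases hj : j ∈ T <;> simp [hj, hμ0 T]
      · obtain ⟨j0, hj0X, hj0T⟩ := Finset.not_disjoint_iff.mp hd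
        simp only [hd, not_false_eq_true, if_true]
        calc μ T = (if j0 ∈ T then μ T else 0) := by simp [hj0T]
          _ ≤ ∑ j ∈ X, (if j ∈ T then μ T else 0) :=
            Finset.single_le_sum (f := fun j => if j ∈ T then μ T else 0)
              (fun j _ => by by_cases hj : j ∈ T <;> simp [hj, hμ0 T]) hj0X
    have hub2 : (∑ j ∈ X, ∑ T : Finset ι, (if j ∈ T then μ T else 0)) ≤ X.card * p := by
      calc (∑ j ∈ X, ∑ T : Finset ι, (if j ∈ T then μ T else 0)) ≤ ∑ _j ∈ X, p :=
            Finset.sum_le_sum fun j _ => h j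
        _ = X.card * p := by rw [Finset.sum_const, nsmul_eq_mul]
    have hcardK : (X.card : ℝ) * p ≤ K * p := by
      apply mul_le_mul_of_nonneg_right _ hp0
      rw [hKdef]
      exact_mod_cast hcard
    linarith
  have stepC : ∀ X ∈ S.powerset,
      w ℓ X * (1 - K * p) ≤ w ℓ X * (∑ T : Finset ι, if Disjoint X T then μ T else 0) := by
    intro X hX
    rcases eq_or_ne (w ℓ X) 0 with h0 | h0
    · simp [h0]
    · exact mul_le_mul_of_nonneg_left (qbound X hX h0) (hw0 ℓ X)
  have hmain : (1 - K * p) * v S ≤ ∑ T : Finset ι, μ T * v (S \ T) := by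
    calc (1 - K * p) * v S = ∑ X ∈ S.powerset, w ℓ X * (1 - K * p) := by
          rw [mul_comm, hℓ, Finset.sum_mul]
      _ ≤ ∑ X ∈ S.powerset, w ℓ X * (∑ T : Finset ι, if Disjoint X T then μ T else 0) :=
          Finset.sum_le_sum stepC
      _ = ∑ T : Finset ι, μ T * (∑ X ∈ S.powerset, if Disjoint X T then w ℓ X else 0) :=
          swap.symm
      _ ≤ ∑ T : Finset ι, μ T * v (S \ T) :=
          Finset.sum_le_sum fun T _ => mul_le_mul_of_nonneg_left (stepA T) (hμ0 T)
  have h2 : β * ((1 - K * p) * v S) ≤ β * ∑ T : Finset ι, μ T * v (S \ T) :=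
    mul_le_mul_of_nonneg_left hmain hβ0
  have heq : β * (1 - K * p) = 1 / α := by
    rw [eq_div_iff (ne_of_gt hαpos)]; exact hfinal
  calc (1 / α) * v S = β * ((1 - K * p) * v S) := by rw [← heq]; ring
    _ ≤ β * ∑ T : Finset ι, μ T * v (S \ T) := h2
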